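/- Let δ ≥ 3, n ≥ 2δ² and s be integers with 1 ≤ s ≤ δ − 1. Then ρ(K_s ∨ (K_{n−s−((δ−2)s+1)(δ+1−s)} ∪ ((δ−2)s+1)K_{δ+1−s})) < ρ(K_δ ∨ (K_{n−δ(δ−1)−1} ∪ (δ(δ−2)+1)K_1)). -/

import Mathlib

open Finset

/-- The spectral radius of a finite simple graph: the largest eigenvalue of its
adjacency matrix (over `ℝ`). -/
noncomputable def specRad {V : Type*} [Fintype V] (G : SimpleGraph V) : ℝ :=
  letI := Classical.decEq V
  letI := Classical.decRel G.Adj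
  sSup (spectrum ℝ (G.adjMatrix ℝ))

/-- `joinCliques s t f` is the graph `K_s ∨ (K_{f 0} ∪ K_{f 1} ∪ ⋯ ∪ K_{f (t-1)})`. -/
def joinCliques (s t : ℕ) (f : Fin t → ℕ) :
    SimpleGraph (Fin s ⊕ (Σ i : Fin t, Fin (f i))) where
  Adj x y := x ≠ y ∧ ∀ a b, x = Sum.inr a → y = Sum.inr b → a.1 = b.1
  symm := ⟨fun _x _y h => ⟨h.1.symm, fun a b hy hx => (h.2 b a hx hy).symm⟩⟩
  loopless := ⟨fun _x h => h.1 rfl⟩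

/-- `gJoin s m t p` is the graph `K_s ∨ (K_m ∪ t·K_p)`. -/
def gJoin (s m t p : ℕ) :=
  joinCliques s (t + 1) (Fin.cons m fun _ => p)

set_option linter.unusedSectionVars false
set_option maxHeartbeats 1000000
section Aux
open Matrix Finset

section Spec
variable {V : Type*} [Fintype V] [DecidableEq V]

lemma spectrum_eq_range {A : Matrix V V ℝ} (hA : A.IsHermitian) :
    spectrum ℝ A = Set.range hA.eigenvalues := by
  have h1 : (hA.eigenvectorUnitary : Matrix V V ℝ) * star (hA.eigenvectorUnitary : Matrix V V ℝ) = 1 :=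
    (Matrix.mem_unitaryGroup_iff).mp hA.eigenvectorUnitary.2
  have h2 : star (hA.eigenvectorUnitary : Matrix V V ℝ) * (hA.eigenvectorUnitary : Matrix V V ℝ) = 1 :=
    (Matrix.mem_unitaryGroup_iff').mp hA.eigenvectorUnitary.2
  let u : (Matrix V V ℝ)ˣ := ⟨(hA.eigenvectorUnitary : Matrix V V ℝ),
    star (hA.eigenvectorUnitary : Matrix V V ℝ), h1, h2⟩
  have hsp : A = (u : Matrix V V ℝ) * (diagonal (RCLike.ofReal ∘ hA.eigenvalues) : Matrix V V ℝ)
      * ((u⁻¹ : (Matrix V V ℝ)ˣ) : Matrix V V ℝ) := hA.spectral_theorem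
  have hc := spectrum.units_conjugate (R := ℝ)
    (a := (diagonal (RCLike.ofReal ∘ hA.eigenvalues) : Matrix V V ℝ)) (u := u)
  rw [← hsp] at hc
  rw [hc, spectrum_diagonal]
  simp [RCLike.ofReal_real_eq_id]

lemma eig_sq_le_rowsum {A : Matrix V V ℝ} (hA : A.IsHermitian)
    (hpos : ∀ i j, 0 ≤ (A * A) i j) {C : ℝ} (hC : ∀ i, ∑ j, (A * A) i j ≤ C)
    {μ : ℝ} (hμ : μ ∈ spectrum ℝ A) : μ ^ 2 ≤ C := by
  rw [spectrum_eq_range hA] at hμ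
  obtain ⟨i, rfl⟩ := hμ
  set μ := hA.eigenvalues i with hμdef
  set v : V → ℝ := ⇑(hA.eigenvectorBasis i) with hv
  have hAv : A *ᵥ v = μ • v := hA.mulVec_eigenvectorBasis i
  have hA2v : (A * A) *ᵥ v = (μ ^ 2) • v := by
    rw [← mulVec_mulVec, hAv, mulVec_smul, hAv, smul_smul]; ring_nf
  obtain ⟨j, hj⟩ : ∃ j, v j ≠ 0 := by
    by_contra hcon
    push_neg at hcon
    have : (hA.eigenvectorBasis i) = 0 := by
      ext w; exact hcon w
    exact hA.eigenvectorBasis.orthonormal.ne_zero i this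
  haveI : Nonempty V := ⟨j⟩
  obtain ⟨i₀, -, hmax⟩ := Finset.exists_max_image Finset.univ (fun w => |v w|)
    ⟨j, Finset.mem_univ j⟩
  have hpos0 : 0 < |v i₀| := lt_of_lt_of_le (abs_pos.mpr hj) (hmax j (Finset.mem_univ j))
  have step : μ ^ 2 * |v i₀| ≤ C * |v i₀| := by
    have e1 : μ ^ 2 * v i₀ = ∑ w, (A * A) i₀ w * v w := by
      have := congrFun hA2v i₀
      simp only [Matrix.mulVec, dotProduct, Pi.smul_apply, smul_eq_mul] at this
      rw [← this]
    calc μ ^ 2 * |v i₀| = |μ ^ 2 * v i₀| := by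
          rw [abs_mul, abs_of_nonneg (sq_nonneg μ)]
      _ = |∑ w, (A * A) i₀ w * v w| := by rw [e1]
      _ ≤ ∑ w, |(A * A) i₀ w * v w| := Finset.abs_sum_le_sum_abs _ _
      _ ≤ ∑ w, (A * A) i₀ w * |v i₀| := by
          apply Finset.sum_le_sum
          intro w _
          rw [abs_mul, abs_of_nonneg (hpos i₀ w)]
          exact mul_le_mul_of_nonneg_left (hmax w (Finset.mem_univ w)) (hpos i₀ w)
      _ = (∑ w, (A * A) i₀ w) * |v i₀| := by rw [Finset.sum_mul]
      _ ≤ C * |v i₀| := mul_le_mul_of_nonneg_right (hC i₀) (abs_nonneg _)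
  exact le_of_mul_le_mul_right step hpos0

lemma clique_bound {A : Matrix V V ℝ} (hA : A.IsHermitian) (S : Finset V)
    (hne : S.Nonempty)
    (hrow : ∀ v ∈ S, ∑ u ∈ S, A v u = (S.card : ℝ) - 1) :
    ∃ μ ∈ spectrum ℝ A, (S.card : ℝ) - 1 ≤ μ := by
  classical
  set U : Matrix V V ℝ := (hA.eigenvectorUnitary : Matrix V V ℝ) with hU
  have h1 : U * star U = 1 := (Matrix.mem_unitaryGroup_iff).mp hA.eigenvectorUnitary.2
  have hD : (diagonal (RCLike.ofReal ∘ hA.eigenvalues) : Matrix V V ℝ)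
      = diagonal hA.eigenvalues := by
    ext a b; simp [RCLike.ofReal_real_eq_id]
  have hsp : A = U * diagonal hA.eigenvalues * star U := by
    rw [← hD]; exact hA.spectral_theorem
  set x : V → ℝ := fun w => if w ∈ S then 1 else 0 with hx
  set y : V → ℝ := x ᵥ* U with hy
  have hstar : star U *ᵥ x = y := by
    ext w
    simp [Matrix.mulVec, Matrix.vecMul, dotProduct, hy, Matrix.star_apply, mul_comm]
  have e1 : x ⬝ᵥ (A *ᵥ x) = ∑ w, hA.eigenvalues w * (y w * y w) := by
    have estep : x ⬝ᵥ (A *ᵥ x)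
        = x ⬝ᵥ ((U * diagonal hA.eigenvalues * star U) *ᵥ x) := by
      conv_lhs => rw [hsp]
    rw [estep, ← mulVec_mulVec, ← mulVec_mulVec, hstar, dotProduct_mulVec]
    simp only [← hy, Matrix.mulVec_diagonal, dotProduct]
    exact Finset.sum_congr rfl fun w _ => by ring
  have e2 : ∑ w, y w * y w = x ⬝ᵥ x := by
    have : (fun w => y w * y w) = fun w => y w * y w := rfl
    have h3 : (∑ w, y w * y w) = y ⬝ᵥ y := rfl
    rw [h3]
    calc y ⬝ᵥ y = (x ᵥ* U) ⬝ᵥ y := by rw [hy]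
      _ = x ⬝ᵥ (U *ᵥ y) := (dotProduct_mulVec x U y).symm
      _ = x ⬝ᵥ ((U * star U) *ᵥ x) := by rw [← hstar, mulVec_mulVec]
      _ = x ⬝ᵥ x := by rw [h1, one_mulVec]
  have exx : x ⬝ᵥ x = (S.card : ℝ) := by
    simp [dotProduct, hx, ite_mul, Finset.sum_ite_mem]
  have exAx : x ⬝ᵥ (A *ᵥ x) = (S.card : ℝ) * ((S.card : ℝ) - 1) := by
    have : ∀ w, (A *ᵥ x) w = ∑ u ∈ S, A w u := by
      intro w
      simp [Matrix.mulVec, dotProduct, hx, mul_ite, Finset.sum_ite_mem]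
    simp only [dotProduct, hx, ite_mul, one_mul, zero_mul]
    rw [Finset.sum_ite_mem, Finset.univ_inter]
    rw [Finset.sum_congr rfl (fun v hv => by rw [this v, hrow v hv])]
    simp [mul_comm]
    ring
  haveI : Nonempty V := ⟨hne.choose⟩
  obtain ⟨i₀, -, hmax⟩ := Finset.exists_max_image Finset.univ hA.eigenvalues
    ⟨hne.choose, Finset.mem_univ _⟩
  refine ⟨hA.eigenvalues i₀, hA.eigenvalues_mem_spectrum_real i₀, ?_⟩
  have hk : 0 < (S.card : ℝ) := by exact_mod_cast Finset.card_pos.mpr hne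
  have hle : (S.card : ℝ) * ((S.card : ℝ) - 1) ≤ hA.eigenvalues i₀ * (S.card : ℝ) := by
    calc (S.card : ℝ) * ((S.card : ℝ) - 1) = x ⬝ᵥ (A *ᵥ x) := exAx.symm
      _ = ∑ w, hA.eigenvalues w * (y w * y w) := e1
      _ ≤ ∑ w, hA.eigenvalues i₀ * (y w * y w) := by
          apply Finset.sum_le_sum
          intro w _
          exact mul_le_mul_of_nonneg_right (hmax w (Finset.mem_univ w)) (mul_self_nonneg _)
      _ = hA.eigenvalues i₀ * (∑ w, y w * y w) := by rw [Finset.mul_sum]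
      _ = hA.eigenvalues i₀ * (S.card : ℝ) := by rw [e2, exx]
  nlinarith [hle, hk]

end Spec

section Glue
variable {V : Type*} [Fintype V]

lemma adjMatrix_isHermitian (G : SimpleGraph V) [DecidableRel G.Adj] :
    (G.adjMatrix ℝ).IsHermitian := by
  unfold Matrix.IsHermitian
  ext i j
  simp only [Matrix.conjTranspose_apply, SimpleGraph.adjMatrix_apply, star_trivial,
    G.adj_comm j i]

lemma adjMatrix_entry_nonneg (G : SimpleGraph V) [DecidableRel G.Adj] (i j : V) :
    0 ≤ (G.adjMatrix ℝ) i j := by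
  by_cases h : G.Adj i j <;> simp [SimpleGraph.adjMatrix_apply, h]

lemma adjMatrix_sq_entry_nonneg (G : SimpleGraph V) [DecidableRel G.Adj] (i j : V) :
    0 ≤ ((G.adjMatrix ℝ) * (G.adjMatrix ℝ)) i j := by
  rw [Matrix.mul_apply]
  exact Finset.sum_nonneg fun w _ =>
    mul_nonneg (adjMatrix_entry_nonneg G i w) (adjMatrix_entry_nonneg G w j)

lemma clique_row (G : SimpleGraph V) [DecidableEq V] [DecidableRel G.Adj] (S : Finset V)
    (hS : (S : Set V).Pairwise G.Adj) :
    ∀ v ∈ S, ∑ u ∈ S, (G.adjMatrix ℝ) v u = (S.card : ℝ) - 1 := by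
  intro v hv
  have : ∀ u ∈ S, (G.adjMatrix ℝ) v u = 1 - (if u = v then 1 else 0) := by
    intro u hu
    by_cases h : u = v
    · subst h; simp [SimpleGraph.adjMatrix_apply, G.irrefl]
    · have := hS hv hu (fun he => h he.symm)
      simp [SimpleGraph.adjMatrix_apply, this, h]
  rw [Finset.sum_congr rfl this, Finset.sum_sub_distrib, Finset.sum_const]
  simp [Finset.sum_ite_eq' S v (fun _ => (1:ℝ)), hv]

end Glue

section Wrap
variable {V : Type*} [Fintype V]

lemma specRad_upper (G : SimpleGraph V) {C : ℝ} (hC0 : 0 ≤ C)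
    (h : ∀ (_ : DecidableRel G.Adj) (i : V),
      ∑ j, ((G.adjMatrix ℝ) * (G.adjMatrix ℝ)) i j ≤ C) :
    specRad G ≤ Real.sqrt C := by
  letI := Classical.decEq V
  letI := Classical.decRel G.Adj
  have hdef : specRad G = sSup (spectrum ℝ (G.adjMatrix ℝ)) := rfl
  rw [hdef]
  apply Real.sSup_le _ (Real.sqrt_nonneg C)
  intro μ hμ
  have hsq : μ ^ 2 ≤ C :=
    eig_sq_le_rowsum (adjMatrix_isHermitian G) (adjMatrix_sq_entry_nonneg G) (h _) hμ
  calc μ ≤ |μ| := le_abs_self μ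
    _ = Real.sqrt (μ ^ 2) := (Real.sqrt_sq_eq_abs μ).symm
    _ ≤ Real.sqrt C := Real.sqrt_le_sqrt hsq

lemma specRad_lower (G : SimpleGraph V) (S : Finset V) (hne : S.Nonempty)
    (hS : (S : Set V).Pairwise G.Adj) :
    (S.card : ℝ) - 1 ≤ specRad G := by
  letI := Classical.decEq V
  letI := Classical.decRel G.Adj
  have hdef : specRad G = sSup (spectrum ℝ (G.adjMatrix ℝ)) := rfl
  rw [hdef]
  obtain ⟨μ, hμmem, hμge⟩ :=
    clique_bound (adjMatrix_isHermitian G) S hne (clique_row G S hS)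
  refine le_trans hμge (le_csSup ?_ hμmem)
  rw [spectrum_eq_range (adjMatrix_isHermitian G)]
  exact (Set.finite_range _).bddAbove

end Wrap

section MulSum
variable {V : Type*} [Fintype V]

lemma mulsum_eq (A : Matrix V V ℝ) (v : V) :
    ∑ w, (A * A) v w = ∑ u, A v u * (∑ w, A u w) := by
  simp only [Matrix.mul_apply]
  rw [Finset.sum_comm]
  exact Finset.sum_congr rfl fun u _ => (Finset.mul_sum _ _ _).symm

end MulSum

section RowSums
variable {s T : ℕ} {f : Fin T → ℕ}

lemma jc_adj_inl (a : Fin s) (y : Fin s ⊕ (Σ i : Fin T, Fin (f i))) :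
    (joinCliques s T f).Adj (Sum.inl a) y ↔ y ≠ Sum.inl a :=
  ⟨fun h => h.1.symm, fun h => ⟨h.symm, fun a' b' h1 => by cases h1⟩⟩

lemma jc_adj_inr_inl (z : Σ i : Fin T, Fin (f i)) (a : Fin s) :
    (joinCliques s T f).Adj (Sum.inr z) (Sum.inl a) :=
  ⟨by simp, fun a' b' _ h => by cases h⟩

lemma jc_adj_inr_inr (z z' : Σ i : Fin T, Fin (f i)) :
    (joinCliques s T f).Adj (Sum.inr z) (Sum.inr z') ↔ z ≠ z' ∧ z.1 = z'.1 :=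
  ⟨fun h => ⟨fun he => h.1 (by rw [he]), h.2 z z' rfl rfl⟩,
   fun h => ⟨by simpa using h.1, fun a b ha hb => by cases ha; cases hb; exact h.2⟩⟩

variable [inst : DecidableRel (joinCliques s T f).Adj]

lemma jc_entry_inl_inl (a a' : Fin s) :
    ((joinCliques s T f).adjMatrix ℝ) (Sum.inl a) (Sum.inl a')
      = 1 - (if a' = a then 1 else 0) := by
  rw [SimpleGraph.adjMatrix_apply]
  by_cases h : a' = a
  · simp [jc_adj_inl, h]
  · simp [jc_adj_inl, h]

lemma jc_entry_inl_inr (a : Fin s) (z : Σ i : Fin T, Fin (f i)) :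
    ((joinCliques s T f).adjMatrix ℝ) (Sum.inl a) (Sum.inr z) = 1 := by
  rw [SimpleGraph.adjMatrix_apply]
  simp [jc_adj_inl]

lemma jc_entry_inr_inl (z : Σ i : Fin T, Fin (f i)) (a : Fin s) :
    ((joinCliques s T f).adjMatrix ℝ) (Sum.inr z) (Sum.inl a) = 1 := by
  rw [SimpleGraph.adjMatrix_apply]
  simp [jc_adj_inr_inl]

lemma jc_entry_inr_inr (z z' : Σ i : Fin T, Fin (f i)) :
    ((joinCliques s T f).adjMatrix ℝ) (Sum.inr z) (Sum.inr z')
      = if z.1 = z'.1 then (1 - if z' = z then 1 else 0) else 0 := by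
  rw [SimpleGraph.adjMatrix_apply]
  by_cases h1 : z.1 = z'.1
  · by_cases h2 : z' = z
    · subst h2; simp [jc_adj_inr_inr]
    · simp [jc_adj_inr_inr, h1, h2, Ne.symm h2]
  · simp [jc_adj_inr_inr, h1]

lemma jc_sum_inl_inl (a : Fin s) :
    ∑ a' : Fin s, ((joinCliques s T f).adjMatrix ℝ) (Sum.inl a) (Sum.inl a')
      = (s : ℝ) - 1 := by
  simp only [jc_entry_inl_inl]
  rw [Finset.sum_sub_distrib, Finset.sum_const, Finset.sum_ite_eq' Finset.univ a fun _ => (1:ℝ)]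
  simp

lemma jc_sum_inl_inr (a : Fin s) :
    ∑ z : Σ i : Fin T, Fin (f i),
      ((joinCliques s T f).adjMatrix ℝ) (Sum.inl a) (Sum.inr z) = ∑ i : Fin T, (f i : ℝ) := by
  simp only [jc_entry_inl_inr]
  rw [Finset.sum_const, Finset.card_univ, Fintype.card_sigma]
  push_cast
  simp

lemma jc_sum_inr_inl (z : Σ i : Fin T, Fin (f i)) :
    ∑ a' : Fin s, ((joinCliques s T f).adjMatrix ℝ) (Sum.inr z) (Sum.inl a') = (s : ℝ) := by
  simp only [jc_entry_inr_inl]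
  simp

lemma jc_sum_inr_inr (z : Σ i : Fin T, Fin (f i)) :
    ∑ z' : Σ i : Fin T, Fin (f i),
      ((joinCliques s T f).adjMatrix ℝ) (Sum.inr z) (Sum.inr z') = (f z.1 : ℝ) - 1 := by
  obtain ⟨j, b⟩ := z
  rw [← Finset.univ_sigma_univ, Finset.sum_sigma]
  have hin : ∀ i : Fin T, (∑ c : Fin (f i),
      ((joinCliques s T f).adjMatrix ℝ) (Sum.inr ⟨j, b⟩) (Sum.inr ⟨i, c⟩))
      = if i = j then (f j : ℝ) - 1 else 0 := by
    intro i
    by_cases hij : i = j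
    · subst hij
      simp only [jc_entry_inr_inr, if_pos rfl, if_pos trivial]
      have : ∀ c : Fin (f i), (if (⟨i, c⟩ : Σ i : Fin T, Fin (f i)) = ⟨i, b⟩ then (1:ℝ) else 0)
          = if c = b then 1 else 0 := by
        intro c
        by_cases hc : c = b
        · subst hc; simp
        · rw [if_neg hc, if_neg (by simp [hc])]
      rw [Finset.sum_congr rfl fun c _ => by rw [this c]]
      rw [Finset.sum_sub_distrib, Finset.sum_const,
        Finset.sum_ite_eq' Finset.univ b fun _ => (1:ℝ)]
      simp
    · rw [if_neg hij]
      apply Finset.sum_eq_zero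
      intro c _
      rw [jc_entry_inr_inr]
      exact if_neg (by simpa using fun h => hij h.symm)
  rw [Finset.sum_congr rfl fun i _ => hin i]
  rw [Finset.sum_ite_eq' Finset.univ j fun _ => (f j : ℝ) - 1]
  simp

lemma jc_dg_inl (a : Fin s) :
    ∑ w, ((joinCliques s T f).adjMatrix ℝ) (Sum.inl a) w
      = ((s : ℝ) + ∑ i : Fin T, (f i : ℝ)) - 1 := by
  rw [Fintype.sum_sum_type, jc_sum_inl_inl, jc_sum_inl_inr]
  ring

lemma jc_dg_inr (z : Σ i : Fin T, Fin (f i)) :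
    ∑ w, ((joinCliques s T f).adjMatrix ℝ) (Sum.inr z) w = (s : ℝ) + (f z.1 : ℝ) - 1 := by
  rw [Fintype.sum_sum_type, jc_sum_inr_inl, jc_sum_inr_inr]
  ring

lemma jc_rowsum_inl (a : Fin s) :
    ∑ w, (((joinCliques s T f).adjMatrix ℝ) * ((joinCliques s T f).adjMatrix ℝ)) (Sum.inl a) w
      = ((s : ℝ) - 1) * (((s : ℝ) + ∑ i : Fin T, (f i : ℝ)) - 1)
        + ∑ i : Fin T, (f i : ℝ) * ((s : ℝ) + (f i : ℝ) - 1) := by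
  rw [mulsum_eq, Fintype.sum_sum_type]
  congr 1
  · rw [Finset.sum_congr rfl fun a' _ => by rw [jc_dg_inl a']]
    rw [← Finset.sum_mul, jc_sum_inl_inl]
  · rw [Finset.sum_congr rfl fun z _ => by rw [jc_dg_inr z, jc_entry_inl_inr, one_mul]]
    rw [← Finset.univ_sigma_univ, Finset.sum_sigma]
    exact Finset.sum_congr rfl fun i _ => by
      dsimp only
      rw [Finset.sum_const]
      simp [mul_comm]

lemma jc_rowsum_inr (z : Σ i : Fin T, Fin (f i)) :
    ∑ w, (((joinCliques s T f).adjMatrix ℝ) * ((joinCliques s T f).adjMatrix ℝ)) (Sum.inr z) w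
      = (s : ℝ) * (((s : ℝ) + ∑ i : Fin T, (f i : ℝ)) - 1)
        + ((f z.1 : ℝ) - 1) * ((s : ℝ) + (f z.1 : ℝ) - 1) := by
  rw [mulsum_eq, Fintype.sum_sum_type]
  congr 1
  · rw [Finset.sum_congr rfl fun a' _ => by rw [jc_dg_inl a', jc_entry_inr_inl, one_mul]]
    rw [Finset.sum_const]
    simp [mul_comm]
  · have hpt : ∀ z' : Σ i : Fin T, Fin (f i),
        ((joinCliques s T f).adjMatrix ℝ) (Sum.inr z) (Sum.inr z')
          * (∑ w, ((joinCliques s T f).adjMatrix ℝ) (Sum.inr z') w)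
        = ((joinCliques s T f).adjMatrix ℝ) (Sum.inr z) (Sum.inr z')
          * ((s : ℝ) + (f z.1 : ℝ) - 1) := by
      intro z'
      rw [jc_dg_inr z']
      by_cases h : z.1 = z'.1
      · rw [h]
      · rw [jc_entry_inr_inr, if_neg h, zero_mul, zero_mul]
    rw [Finset.sum_congr rfl fun z' _ => hpt z', ← Finset.sum_mul, jc_sum_inr_inr]

end RowSums

section Arith
variable {d s n : ℝ}

lemma arithA1 (hd : 3 ≤ d) (hs1 : 1 ≤ s) (hs2 : s ≤ d - 1)
    (hn : 2*d^2 ≤ n) (hM : s + ((d-2)*s+1)*(d+1-s) ≤ n) :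
    (s-1)*(n-1) + (n - s - ((d-2)*s+1)*(d+1-s))*(s + (n - s - ((d-2)*s+1)*(d+1-s)) - 1)
      + ((d-2)*s+1)*((d+1-s)*(s + (d+1-s) - 1)) ≤ (n - (d-1)^2 - 1)^2 - 1 := by
  set tp := ((d-2)*s+1)*(d+1-s) with htp
  set M := n - s - tp with hMdef
  have hM0 : 0 ≤ M := by simp [hMdef]; linarith
  set u := tp - (d-1)^2 - d + 1 with hu
  have hu0 : 0 ≤ u := by
    have h1 : 0 ≤ d^2-2*d-1 - (d-2)*s := by
      nlinarith [mul_nonneg (by linarith : (0:ℝ) ≤ d-1-s) (by linarith : (0:ℝ) ≤ d-2)]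
    have := mul_nonneg (by linarith : (0:ℝ) ≤ s - 1) h1
    simp only [hu, htp]; nlinarith [this]
  have hMu : d^2 + 1 ≤ M + u := by simp only [hMdef, hu]; nlinarith []
  have key1 : 0 ≤ (M + u - (d^2+1)) * (d-1) := mul_nonneg (by linarith) (by linarith)
  have key2 : 0 ≤ (M + u - (d^2+1)) * u := mul_nonneg (by linarith) hu0
  have key3 : 0 ≤ M * u := mul_nonneg hM0 hu0
  have hb : (0:ℝ) ≤ d-1-s := by linarith
  nlinarith [key1, key2, key3, mul_nonneg hb (by linarith : (0:ℝ) ≤ d-2),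
    mul_nonneg (mul_nonneg hb (by linarith : (0:ℝ) ≤ d-2)) (by linarith : (0:ℝ) ≤ d-1),
    sq_nonneg u, mul_nonneg hM0 (by linarith : (0:ℝ) ≤ d-1)]

lemma arithA2 (hd : 3 ≤ d) (hs1 : 1 ≤ s) (hs2 : s ≤ d - 1)
    (hn : 2*d^2 ≤ n) (hM : s + ((d-2)*s+1)*(d+1-s) ≤ n) :
    s*(n-1) + (n - s - ((d-2)*s+1)*(d+1-s) - 1)*(s + (n - s - ((d-2)*s+1)*(d+1-s)) - 1)
      ≤ (n - (d-1)^2 - 1)^2 - 1 := by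
  set tp := ((d-2)*s+1)*(d+1-s) with htp
  set M := n - s - tp with hMdef
  have hM0 : 0 ≤ M := by simp [hMdef]; linarith
  set u := tp - (d-1)^2 - d + 1 with hu
  have hu0 : 0 ≤ u := by
    have h1 : 0 ≤ d^2-2*d-1 - (d-2)*s := by
      nlinarith [mul_nonneg (by linarith : (0:ℝ) ≤ d-1-s) (by linarith : (0:ℝ) ≤ d-2)]
    have := mul_nonneg (by linarith : (0:ℝ) ≤ s - 1) h1
    simp only [hu, htp]; nlinarith [this]
  have hMu : d^2 + 1 ≤ M + u := by simp only [hMdef, hu]; nlinarith []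
  have key1 : 0 ≤ (M + u - (d^2+1)) * (d-1) := mul_nonneg (by linarith) (by linarith)
  have key2 : 0 ≤ (M + u - (d^2+1)) * u := mul_nonneg (by linarith) hu0
  have key3 : 0 ≤ M * u := mul_nonneg hM0 hu0
  have hb : (0:ℝ) ≤ d-1-s := by linarith
  nlinarith [key1, key2, key3, mul_nonneg hb (by linarith : (0:ℝ) ≤ d-2),
    mul_nonneg (mul_nonneg hb (by linarith : (0:ℝ) ≤ d-2)) (by linarith : (0:ℝ) ≤ d-1),
    sq_nonneg u, mul_nonneg hM0 (by linarith : (0:ℝ) ≤ d-1)]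

lemma arithA3 (hd : 3 ≤ d) (hs1 : 1 ≤ s) (hs2 : s ≤ d - 1) (hn : 2*d^2 ≤ n) :
    s*(n-1) + (d+1-s-1)*(s + (d+1-s) - 1) ≤ (n - (d-1)^2 - 1)^2 - 1 := by
  nlinarith [mul_nonneg (by linarith : (0:ℝ) ≤ d-1-s) (by linarith : (0:ℝ) ≤ n - 2*d^2),
    mul_nonneg (by nlinarith : (0:ℝ) ≤ d^2) (by linarith : (0:ℝ) ≤ n - 2*d^2),
    sq_nonneg (n - 2*d^2), mul_nonneg (by linarith : (0:ℝ) ≤ d-3) (by linarith : (0:ℝ) ≤ d),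
    mul_nonneg (by linarith : (0:ℝ) ≤ d-1-s) (by linarith : (0:ℝ) ≤ d)]

lemma arithB1 (hd : 3 ≤ d) (hs1 : 1 ≤ s) (hs2 : s ≤ d - 1) (hn : 2*d^2 ≤ n) :
    (s-1)*(s + ((d-2)*s+1)*(d+1-s) - 1) + ((d-2)*s+1)*((d+1-s)*(s + (d+1-s) - 1))
      ≤ (n - (d-1)^2 - 1)^2 - 1 := by
  set tp := ((d-2)*s+1)*(d+1-s) with htp
  have htp0 : 0 ≤ tp := by
    simp only [htp]; apply mul_nonneg <;> nlinarith
  have h4tp : 4*(d-2)*tp ≤ (d^2-d-1)^2 := by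
    simp only [htp]; nlinarith [sq_nonneg ((d-2)*s+1 - (d-2)*(d+1-s))]
  have hK1 : d^2+2*d-2 ≤ n - (d-1)^2 - 1 := by nlinarith
  have hKsq : (d^2+2*d-2)^2 ≤ (n-(d-1)^2-1)^2 := by
    nlinarith [sq_nonneg (n - (d-1)^2 - 1 - (d^2+2*d-2))]
  nlinarith [mul_nonneg (by linarith : (0:ℝ) ≤ d-1)
      (by linarith : (0:ℝ) ≤ (d^2-d-1)^2 - 4*(d-2)*tp),
    mul_nonneg (by linarith : (0:ℝ) ≤ d-1-s) (by linarith : (0:ℝ) ≤ s+tp-1),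
    mul_nonneg (by linarith : (0:ℝ) ≤ d-1-s) htp0, htp0, hKsq,
    mul_nonneg (by linarith : (0:ℝ) ≤ d-3) (by linarith : (0:ℝ) ≤ d)]

lemma arithB3 (hd : 3 ≤ d) (hs1 : 1 ≤ s) (hs2 : s ≤ d - 1) (hn : 2*d^2 ≤ n) :
    s*(s + ((d-2)*s+1)*(d+1-s) - 1) + (d+1-s-1)*(s + (d+1-s) - 1)
      ≤ (n - (d-1)^2 - 1)^2 - 1 := by
  set tp := ((d-2)*s+1)*(d+1-s) with htp
  have htp0 : 0 ≤ tp := by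
    simp only [htp]; apply mul_nonneg <;> nlinarith
  have h4tp : 4*(d-2)*tp ≤ (d^2-d-1)^2 := by
    simp only [htp]; nlinarith [sq_nonneg ((d-2)*s+1 - (d-2)*(d+1-s))]
  have hK1 : d^2+2*d-2 ≤ n - (d-1)^2 - 1 := by nlinarith
  have hKsq : (d^2+2*d-2)^2 ≤ (n-(d-1)^2-1)^2 := by
    nlinarith [sq_nonneg (n - (d-1)^2 - 1 - (d^2+2*d-2))]
  nlinarith [mul_nonneg (by linarith : (0:ℝ) ≤ d-1)
      (by linarith : (0:ℝ) ≤ (d^2-d-1)^2 - 4*(d-2)*tp),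
    mul_nonneg (by linarith : (0:ℝ) ≤ d-1-s) (by linarith : (0:ℝ) ≤ s+tp-1),
    mul_nonneg (by linarith : (0:ℝ) ≤ d-1-s) htp0, htp0, hKsq,
    mul_nonneg (by linarith : (0:ℝ) ≤ d-3) (by linarith : (0:ℝ) ≤ d)]

end Arith


end Aux

/-- Let `δ ≥ 3`, `n ≥ 2δ²` and `s` be integers with `1 ≤ s ≤ δ − 1`.  Then
`ρ(K_s ∨ (K_{n−s−((δ−2)s+1)(δ+1−s)} ∪ ((δ−2)s+1)K_{δ+1−s})) <
  ρ(K_δ ∨ (K_{n−δ(δ−1)−1} ∪ (δ(δ−2)+1)K_1))`. -/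
theorem stmt_11 (δ n s : ℕ) (hδ : 3 ≤ δ) (hn : 2 * δ ^ 2 ≤ n)
    (hs₁ : 1 ≤ s) (hs₂ : s ≤ δ - 1) :
    specRad (gJoin s (n - s - ((δ - 2) * s + 1) * (δ + 1 - s)) ((δ - 2) * s + 1) (δ + 1 - s)) <
      specRad (gJoin δ (n - δ * (δ - 1) - 1) (δ * (δ - 2) + 1) 1) := by
  set t : ℕ := (δ - 2) * s + 1 with ht
  set p : ℕ := δ + 1 - s with hp
  set m : ℕ := n - s - t * p with hm
  set t' : ℕ := δ * (δ - 2) + 1 with ht'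
  set m' : ℕ := n - δ * (δ - 1) - 1 with hm'
  show specRad (joinCliques s (t+1) (Fin.cons m (fun _ => p))) <
    specRad (joinCliques δ (t'+1) (Fin.cons m' (fun _ => 1)))
  have hdR : (3:ℝ) ≤ (δ:ℝ) := by exact_mod_cast hδ
  have hs1R : (1:ℝ) ≤ (s:ℝ) := by exact_mod_cast hs₁
  have hs2R : (s:ℝ) ≤ (δ:ℝ) - 1 := by
    have h' : s + 1 ≤ δ := by omega
    have : (s:ℝ) + 1 ≤ (δ:ℝ) := by exact_mod_cast h'
    linarith
  have hnR : 2*(δ:ℝ)^2 ≤ (n:ℝ) := by exact_mod_cast hn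
  have htR : (t:ℝ) = ((δ:ℝ)-2)*(s:ℝ)+1 := by
    rw [ht]; push_cast [Nat.cast_sub (by omega : 2 ≤ δ)]; ring
  have hpR : (p:ℝ) = (δ:ℝ)+1-(s:ℝ) := by
    rw [hp]; push_cast [Nat.cast_sub (by omega : s ≤ δ+1)]; ring
  set K1 : ℝ := (n:ℝ) - ((δ:ℝ)-1)^2 - 1 with hK1
  have hK1pos : 1 ≤ K1 := by rw [hK1]; nlinarith
  have hC0 : (0:ℝ) ≤ K1^2 - 1 := by nlinarith
  -- upper bound for the left graph
  have hupper : specRad (joinCliques s (t+1) (Fin.cons m (fun _ => p))) ≤ Real.sqrt (K1^2 - 1) := by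
    apply specRad_upper _ hC0
    intro inst v
    have hsum1 : (∑ i : Fin (t+1), ((Fin.cons m (fun _ => p) : Fin (t+1) → ℕ) i : ℝ))
        = (m:ℝ) + (t:ℝ)*(p:ℝ) := by
      rw [Fin.sum_univ_succ]
      simp [Finset.sum_const, mul_comm]
    have hsum2 : (∑ i : Fin (t+1), ((Fin.cons m (fun _ => p) : Fin (t+1) → ℕ) i : ℝ)
          * ((s:ℝ) + ((Fin.cons m (fun _ => p) : Fin (t+1) → ℕ) i : ℝ) - 1))
        = (m:ℝ)*((s:ℝ)+(m:ℝ)-1) + (t:ℝ)*((p:ℝ)*((s:ℝ)+(p:ℝ)-1)) := by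
      rw [Fin.sum_univ_succ]
      simp [Finset.sum_const, mul_comm]
    rcases le_or_gt (s + t * p) n with hreg | hreg
    · -- regime A : m = n - s - t*p ≥ 0 exactly
      have hmA : (m:ℝ) = (n:ℝ) - (s:ℝ) - (t:ℝ)*(p:ℝ) := by
        have h1 : m = n - (s + t * p) := by omega
        rw [h1]
        push_cast [Nat.cast_sub hreg]
        ring
      rcases v with a | ⟨j, b⟩
      · rw [jc_rowsum_inl, hsum1, hsum2, hmA, htR, hpR]
        have := arithA1 hdR hs1R hs2R hnR (by rw [← htR, ← hpR]; linarith [hmA,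
          (by exact_mod_cast Nat.zero_le m : (0:ℝ) ≤ (m:ℝ))])
        rw [hK1]
        linarith [this]
      · rcases Fin.eq_zero_or_eq_succ j with rfl | ⟨i, rfl⟩
        · -- component 0 : clique K_m
          rw [jc_rowsum_inr, hsum1]
          dsimp only
          rw [Fin.cons_zero, hmA, htR, hpR]
          have := arithA2 hdR hs1R hs2R hnR (by rw [← htR, ← hpR]; linarith [hmA,
            (by exact_mod_cast Nat.zero_le m : (0:ℝ) ≤ (m:ℝ))])
          rw [hK1]
          linarith [this]
        · rw [jc_rowsum_inr, hsum1]
          dsimp only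
          rw [Fin.cons_succ, hmA, htR, hpR]
          have := arithA3 hdR hs1R hs2R hnR
          rw [hK1]
          nlinarith [this, mul_nonneg (by linarith : (0:ℝ) ≤ (δ:ℝ)+1-(s:ℝ)-1)
            (by linarith : (0:ℝ) ≤ (s:ℝ) + ((δ:ℝ)+1-(s:ℝ)) - 1)]
    · -- regime B : m = 0
      have hm0 : m = 0 := by omega
      have hmR0 : (m:ℝ) = 0 := by rw [hm0]; norm_num
      have hnB : (n:ℝ) ≤ (s:ℝ) + (t:ℝ)*(p:ℝ) := by exact_mod_cast hreg.le
      rcases v with a | ⟨j, b⟩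
      · rw [jc_rowsum_inl, hsum1, hsum2, hmR0, htR, hpR]
        have := arithB1 hdR hs1R hs2R hnR
        rw [hK1]
        linarith [this]
      · rcases Fin.eq_zero_or_eq_succ j with rfl | ⟨i, rfl⟩
        · exfalso
          have hposm : 0 < (Fin.cons m (fun _ => p) : Fin (t+1) → ℕ) 0 := b.pos
          rw [Fin.cons_zero] at hposm
          omega
        · rw [jc_rowsum_inr, hsum1]
          dsimp only
          rw [Fin.cons_succ, hmR0, htR, hpR]
          have := arithB3 hdR hs1R hs2R hnR
          rw [hK1]
          linarith [this]
  -- lower bound for the right graph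
  have hlower : K1 ≤ specRad (joinCliques δ (t'+1) (Fin.cons m' (fun _ => 1))) := by
    classical
    set f' : Fin (t'+1) → ℕ := Fin.cons m' (fun _ => 1) with hf'
    set S : Finset (Fin δ ⊕ Σ i : Fin (t'+1), Fin (f' i)) :=
      (Finset.univ.image (Sum.inl : Fin δ → Fin δ ⊕ Σ i : Fin (t'+1), Fin (f' i))) ∪
        (Finset.univ.image fun b : Fin (f' 0) =>
          (Sum.inr ⟨0, b⟩ : Fin δ ⊕ Σ i : Fin (t'+1), Fin (f' i))) with hS
    have hdisj : Disjoint
        (Finset.univ.image (Sum.inl : Fin δ → Fin δ ⊕ Σ i : Fin (t'+1), Fin (f' i)))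
        (Finset.univ.image fun b : Fin (f' 0) =>
          (Sum.inr ⟨0, b⟩ : Fin δ ⊕ Σ i : Fin (t'+1), Fin (f' i))) := by
      rw [Finset.disjoint_left]
      rintro x hx hy
      simp only [Finset.mem_image] at hx hy
      obtain ⟨a, -, rfl⟩ := hx
      obtain ⟨b, -, hb⟩ := hy
      cases hb
    have hcard : S.card = δ + m' := by
      rw [hS, Finset.card_union_of_disjoint hdisj,
        Finset.card_image_of_injective _ Sum.inl_injective,
        Finset.card_image_of_injective _ (fun b b' h => by
          simpa using h)]
      simp [hf', Fin.cons_zero]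
    have hne : S.Nonempty := by
      refine ⟨Sum.inl ⟨0, by omega⟩, ?_⟩
      simp [hS]
    have hpair : (S : Set (Fin δ ⊕ Σ i : Fin (t'+1), Fin (f' i))).Pairwise
        (joinCliques δ (t'+1) f').Adj := by
      intro x hx y hy hxy
      simp only [hS, Finset.coe_union, Finset.coe_image, Set.mem_union, Set.mem_image] at hx hy
      rcases hx with ⟨a, -, rfl⟩ | ⟨b, -, rfl⟩ <;> rcases hy with ⟨a', -, rfl⟩ | ⟨b', -, rfl⟩
      · exact (jc_adj_inl a (Sum.inl a')).mpr (Ne.symm hxy)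
      · exact (jc_adj_inr_inl _ a).symm
      · exact jc_adj_inr_inl _ a'
      · refine (jc_adj_inr_inr _ _).mpr ⟨?_, rfl⟩
        intro he
        exact hxy (by rw [he])
    have hlow := specRad_lower (joinCliques δ (t'+1) f') S hne hpair
    have hm'R : (m':ℝ) = (n:ℝ) - (δ:ℝ)*((δ:ℝ)-1) - 1 := by
      have h1 : m' = n - (δ * (δ - 1) + 1) := by omega
      have h2 : δ * (δ - 1) + 1 ≤ n := by
        have := Nat.sub_le δ 1
        nlinarith [hn, hδ]
      rw [h1]
      push_cast [Nat.cast_sub h2, Nat.cast_sub (by omega : 1 ≤ δ)]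
      ring
    have : ((S.card : ℝ)) - 1 = K1 := by
      rw [hcard]
      push_cast
      rw [hm'R, hK1]
      ring
    rw [this] at hlow
    exact hlow
  have hsqrt : Real.sqrt (K1^2 - 1) < K1 :=
    (Real.sqrt_lt' (by linarith)).mpr (by linarith)
  calc specRad (joinCliques s (t+1) (Fin.cons m (fun _ => p))) ≤ Real.sqrt (K1^2 - 1) := hupper
    _ < K1 := hsqrt
    _ ≤ specRad (joinCliques δ (t'+1) (Fin.cons m' (fun _ => 1))) := hlower
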